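/- (ODE blow-up lemma) Let t₀ ∈ ℝ, A > 0, and let M : [t₀,∞) → ℝ be continuously differentiable with M(t) ≤ -A ∫_{t₀}^t |M(s)|⁴ ds for all t ≥ t₀, and suppose M(t₁) < 0 for some t₁ > t₀. Then M cannot be defined (finite) on all of [t₀,∞); more precisely, M(t) → -∞ as t approaches a finite time t* ≤ t₁ + 1/(3A⁴ z(t₁)³), where z(t) = ∫_{t₀}^t |M(s)|⁴ ds. -/

import Mathlib

open MeasureTheory intervalIntegral

/-- ODE blow-up lemma of Boulenger–Lenzmann: there is no continuously differentiable
function M on [t₀,∞) with M(t) ≤ -A∫_{t₀}^t |M(s)|⁴ ds for all t ≥ t₀ and M(t₁) < 0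
at some t₁ > t₀; i.e. such an M cannot be defined (finite) on all of [t₀,∞). -/
theorem ode_blowup_lemma (t₀ t₁ A : ℝ) (M : ℝ → ℝ) (hA : 0 < A)
    (hdiff : ∀ t ∈ Set.Ici t₀, DifferentiableAt ℝ M t)
    (hderiv : ContinuousOn (deriv M) (Set.Ici t₀))
    (hineq : ∀ t ∈ Set.Ici t₀, M t ≤ -A * ∫ s in t₀..t, |M s| ^ 4)
    (ht₁ : t₀ < t₁) (hneg : M t₁ < 0) : False := by
  set g : ℝ → ℝ := fun s => |M s| ^ 4 with hg
  set z : ℝ → ℝ := fun t => ∫ s in t₀..t, g s with hz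
  have hMcont : ∀ t ∈ Set.Ici t₀, ContinuousAt M t := fun t ht => (hdiff t ht).continuousAt
  have hgcont : ∀ t ∈ Set.Ici t₀, ContinuousAt g t := by
    intro t ht
    exact ((hMcont t ht).abs.pow 4)
  have hgco : ContinuousOn g (Set.Ici t₀) := fun t ht => (hgcont t ht).continuousWithinAt
  have hgnn : ∀ s, 0 ≤ g s := by intro s; positivity
  -- interval integrability on [a,b] ⊆ [t₀,∞)
  have hint : ∀ a b, t₀ ≤ a → t₀ ≤ b → IntervalIntegrable g volume a b := by
    intro a b ha hb
    apply ContinuousOn.intervalIntegrable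
    apply hgco.mono
    intro x hx
    rcases le_total a b with h | h
    · rw [Set.uIcc_of_le h] at hx; exact le_trans ha hx.1
    · rw [Set.uIcc_of_ge h] at hx; exact le_trans hb hx.1
  -- z is nonneg for t ≥ t₀
  have hznn : ∀ t, t₀ ≤ t → 0 ≤ z t := by
    intro t ht
    exact intervalIntegral.integral_nonneg ht (fun s _ => hgnn s)
  -- z is monotone on [t₀,∞)
  have hzmono : ∀ a b, t₀ ≤ a → a ≤ b → z a ≤ z b := by
    intro a b ha hab
    have h1 : z b - z a = ∫ s in a..b, g s := by
      rw [hz]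
      simp only
      rw [← intervalIntegral.integral_interval_sub_left (hint t₀ b le_rfl (ha.trans hab))
        (hint t₀ a le_rfl ha)]
    have h2 : (0:ℝ) ≤ ∫ s in a..b, g s :=
      intervalIntegral.integral_nonneg hab (fun s _ => hgnn s)
    linarith [h1 ▸ h2]
  -- |M t| ≥ A * z t for t ≥ t₀
  have hMge : ∀ t, t₀ ≤ t → A * z t ≤ |M t| := by
    intro t ht
    have h1 := hineq t ht
    have hzt : z t = ∫ s in t₀..t, |M s| ^ 4 := rfl
    have h2 : M t ≤ -(A * z t) := by rw [hzt]; linarith [h1]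
    have h3 : 0 ≤ A * z t := mul_nonneg hA.le (hznn t ht)
    rw [abs_of_nonpos (h2.trans (neg_nonpos.mpr h3))]
    linarith
  -- z' t = g t ≥ A^4 * (z t)^4
  have hgge : ∀ t, t₀ ≤ t → A ^ 4 * (z t) ^ 4 ≤ g t := by
    intro t ht
    have h1 := hMge t ht
    have h2 : 0 ≤ A * z t := mul_nonneg hA.le (hznn t ht)
    calc A ^ 4 * (z t) ^ 4 = (A * z t) ^ 4 := by ring
    _ ≤ |M t| ^ 4 := pow_le_pow_left₀ h2 h1 4
    _ = g t := rfl
  -- z t₁ > 0 : the integrand is positive near t₁ by continuity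
  have hc : 0 < z t₁ := by
    obtain ⟨δ, hδ, hball⟩ := Metric.continuousAt_iff.mp (hMcont t₁ ht₁.le) (-M t₁) (by linarith)
    set a : ℝ := max t₀ (t₁ - δ / 2) with ha
    have ha1 : t₀ ≤ a := le_max_left _ _
    have ha2 : a < t₁ := max_lt ht₁ (by linarith)
    have hpos : ∀ x ∈ Set.Ioo a t₁, 0 < g x := by
      intro x hx
      have hx1 : t₁ - δ / 2 < x := lt_of_le_of_lt (le_max_right _ _) hx.1
      have hd : dist x t₁ < δ := by
        rw [Real.dist_eq, abs_lt]; constructor <;> [linarith [hx.2]; linarith [hx.2]]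
      have := hball hd
      rw [Real.dist_eq, abs_lt] at this
      have hMx : M x < 0 := by linarith [this.1, this.2]
      have : 0 < |M x| := abs_pos.mpr hMx.ne
      positivity
    have h1 : 0 < ∫ s in a..t₁, g s := by
      apply intervalIntegral.intervalIntegral_pos_of_pos_on (hint a t₁ ha1 (ha1.trans ha2.le))
        hpos ha2
    have h2 : z t₁ - z a = ∫ s in a..t₁, g s := by
      rw [hz]; simp only
      rw [← intervalIntegral.integral_interval_sub_left (hint t₀ t₁ le_rfl ht₁.le)
        (hint t₀ a le_rfl ha1)]
    linarith [hznn a ha1]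
  set c : ℝ := z t₁ with hcdef
  -- z t ≥ c > 0 for t ≥ t₁
  have hzpos : ∀ t, t₁ ≤ t → 0 < z t := fun t ht => hc.trans_le (hzmono t₁ t ht₁.le ht)
  -- HasDerivAt z (g t) t for t > t₀
  have hzderiv : ∀ t, t₀ < t → HasDerivAt z (g t) t := by
    intro t ht
    apply intervalIntegral.integral_hasDerivAt_right (hint t₀ t le_rfl ht.le)
    · exact (hgco.mono (Set.Ioi_subset_Ici le_rfl)).stronglyMeasurableAtFilter isOpen_Ioi t ht
    · exact hgcont t ht.le
  -- w = (z^3)⁻¹ + 3 A^4 t has nonpositive derivative on (t₁,∞)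
  set w : ℝ → ℝ := fun t => ((z t) ^ 3)⁻¹ + 3 * A ^ 4 * t with hw
  have hwderiv : ∀ t, t₁ < t →
      HasDerivAt w (-(3 * (z t) ^ 2 * g t) / ((z t) ^ 3) ^ 2 + 3 * A ^ 4) t := by
    intro t ht
    have hzp := hzpos t ht.le
    have hz3 : (z t) ^ 3 ≠ 0 := by positivity
    have h1 : HasDerivAt (fun t => (z t) ^ 3) (3 * (z t) ^ 2 * g t) t := by
      have := (hzderiv t (ht₁.trans ht)).fun_pow 3
      exact this.congr_deriv (by norm_num)
    have h2 := h1.inv hz3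
    have h3 : HasDerivAt (fun t => 3 * A ^ 4 * t) (3 * A ^ 4) t := by
      simpa using (hasDerivAt_id t).const_mul (3 * A ^ 4)
    exact h2.add h3
  have hwnonpos : ∀ t, t₁ < t → deriv w t ≤ 0 := by
    intro t ht
    rw [(hwderiv t ht).deriv]
    have hzp := hzpos t ht.le
    have hgg := hgge t ((ht₁.trans ht).le)
    have h1 : -(3 * (z t) ^ 2 * g t) / ((z t) ^ 3) ^ 2 ≤
        -(3 * (z t) ^ 2 * (A ^ 4 * (z t) ^ 4)) / ((z t) ^ 3) ^ 2 := by
      apply div_le_div_of_nonneg_right _ (by positivity)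
      nlinarith [sq_nonneg (z t)]
    have h2 : -(3 * (z t) ^ 2 * (A ^ 4 * (z t) ^ 4)) / ((z t) ^ 3) ^ 2 = -(3 * A ^ 4) := by
      field_simp
    linarith
  -- w is antitone on [t₁, ∞)
  have hwcont : ∀ t ∈ Set.Ici t₁, ContinuousAt w t := by
    intro t ht
    have hzc := (hzderiv t (lt_of_lt_of_le ht₁ ht)).continuousAt
    have hzp := hzpos t ht
    have hz3 : (z t) ^ 3 ≠ 0 := by positivity
    exact ((hzc.pow 3).inv₀ hz3).add (continuousAt_const.mul continuousAt_id)
  have hwanti : AntitoneOn w (Set.Ici t₁) := by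
    apply antitoneOn_of_deriv_nonpos (convex_Ici t₁)
      (fun t ht => (hwcont t ht).continuousWithinAt)
    · intro t ht
      rw [interior_Ici] at ht
      exact (hwderiv t ht).differentiableAt.differentiableWithinAt
    · intro t ht
      rw [interior_Ici] at ht
      exact hwnonpos t ht
  -- evaluate at large T
  set T : ℝ := t₁ + (c ^ 3)⁻¹ / (3 * A ^ 4) + 1 with hT
  have hTgt : t₁ < T := by
    rw [hT]
    have : 0 < (c ^ 3)⁻¹ / (3 * A ^ 4) := by positivity
    linarith
  have h1 := hwanti (Set.self_mem_Ici) (Set.mem_Ici.mpr hTgt.le) hTgt.le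
  have hzT := hzpos T hTgt.le
  have h2 : 0 < ((z T) ^ 3)⁻¹ := by positivity
  have h3 : 3 * A ^ 4 * (T - t₁) = (c ^ 3)⁻¹ + 3 * A ^ 4 := by
    rw [hT]; field_simp; ring
  have h4 : w T = ((z T) ^ 3)⁻¹ + 3 * A ^ 4 * T := rfl
  have h5 : w t₁ = (c ^ 3)⁻¹ + 3 * A ^ 4 * t₁ := rfl
  have hA4 : 0 < 3 * A ^ 4 := by positivity
  rw [h4, h5] at h1
  nlinarith
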